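/- Let R be a commutative noetherian ring, X an object of D(Mod R), p a prime ideal of R, n an integer, and E(R/p) an injective hull of R/p. Then Hom_{D(Mod R)}(X, E(R/p)[-n]) = 0 if and only if p ∉ Supp H^n(X), i.e., if and only if the localization H^n(X)_p is zero. -/

import Mathlib

open CategoryTheory CategoryTheory.Limits

/-- The stalk complex with the module `M` concentrated in cohomological degree `n`,
viewed as an object of the derived category; this is `M[-n]`. -/
noncomputable def stalk (R : Type) [CommRing R] [HasDerivedCategory (ModuleCat R)]
    (M : ModuleCat R) (n : ℤ) : DerivedCategory (ModuleCat R) :=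
  DerivedCategory.Q.obj ((HomologicalComplex.single (ModuleCat R) (ComplexShape.up ℤ) n).obj M)

/-- `f : M →ₗ[R] E` exhibits `E` as an injective hull of `M`: `E` is an injective module
and `f` is injective with essential image (every nonzero submodule of `E` meets the image
of `f` nontrivially). -/
structure IsInjectiveHull (R : Type) [CommRing R] {M E : Type} [AddCommGroup M] [Module R M]
    [AddCommGroup E] [Module R E] (f : M →ₗ[R] E) : Prop where
  injective : Module.Injective R E
  mono : Function.Injective f
  essential : ∀ N : Submodule R E, N ≠ ⊥ → N ⊓ LinearMap.range f ≠ ⊥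

section ModuleTheory

variable {R : Type} [CommRing R] {p : Ideal R} [p.IsPrime] {E : Type}
  [AddCommGroup E] [Module R E] {f : (R ⧸ p) →ₗ[R] E}

/-- Multiplication by an element outside `p` is injective on the injective hull of `R/p`. -/
lemma IsInjectiveHull.smul_injective (hf : IsInjectiveHull R f) {s : R}
    (hs : s ∈ p.primeCompl) {e : E} (he : s • e = 0) : e = 0 := by
  by_contra hne
  set N : Submodule R E := LinearMap.ker (LinearMap.lsmul R E s) with hN
  have hNne : N ≠ ⊥ := by
    intro h
    have : e ∈ N := by simpa [hN, LinearMap.mem_ker] using he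
    rw [h, Submodule.mem_bot] at this
    exact hne this
  obtain ⟨x, hx, hxne⟩ := Submodule.exists_mem_ne_zero_of_ne_bot (hf.essential N hNne)
  obtain ⟨hxN, y, rfl⟩ := hx
  obtain ⟨r, rfl⟩ := Submodule.Quotient.mk_surjective p y
  have hsy : f (s • Submodule.Quotient.mk r) = 0 := by
    rw [map_smul]
    simpa [hN, LinearMap.mem_ker] using hxN
  have h0 : s • (Submodule.Quotient.mk r : R ⧸ p) = 0 := by
    apply hf.mono
    simpa using hsy
  rw [← Submodule.Quotient.mk_smul, Submodule.Quotient.mk_eq_zero, smul_eq_mul] at h0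
  have hr : r ∈ p := ((Ideal.IsPrime.mem_or_mem ‹p.IsPrime› h0).resolve_left hs)
  exact hxne (by rw [(Submodule.Quotient.mk_eq_zero p).2 hr, map_zero])

/-- `Hom(M, E) = 0` iff `M_p = 0`, for `E` an injective hull of `R/p`. -/
lemma IsInjectiveHull.forall_hom_eq_zero_iff (hf : IsInjectiveHull R f)
    (M : Type) [AddCommGroup M] [Module R M] :
    (∀ φ : M →ₗ[R] E, φ = 0) ↔ Subsingleton (LocalizedModule p.primeCompl M) := by
  rw [LocalizedModule.subsingleton_iff]
  constructor
  · intro h m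
    by_contra hm
    push_neg at hm
    set ℓ := LinearMap.toSpanSingleton R M m with hℓ
    have hker : LinearMap.ker ℓ ≤ p := by
      intro r hr
      by_contra hrp
      exact hm r hrp (by simpa [hℓ, LinearMap.toSpanSingleton_apply] using hr)
    set g0 : R →ₗ[R] E := f ∘ₗ p.mkQ with hg0
    have hg0ker : LinearMap.ker ℓ ≤ LinearMap.ker g0 := by
      intro r hr
      have : (r : R) ∈ p := hker hr
      rw [hg0, LinearMap.mem_ker, LinearMap.comp_apply, Submodule.mkQ_apply,
        (Submodule.Quotient.mk_eq_zero p).2 this, map_zero]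
    have hiinj : Function.Injective ((LinearMap.ker ℓ).liftQ ℓ le_rfl) := by
      rw [← LinearMap.ker_eq_bot, Submodule.ker_liftQ_eq_bot _ _ _ le_rfl]
    obtain ⟨φ, hφ⟩ := hf.injective.out ((LinearMap.ker ℓ).liftQ ℓ le_rfl) hiinj
      ((LinearMap.ker ℓ).liftQ g0 hg0ker)
    have h1 : φ m = f (Submodule.Quotient.mk 1) := by
      have h2 := hφ (Submodule.Quotient.mk 1)
      rw [Submodule.liftQ_apply, Submodule.liftQ_apply, hℓ,
        LinearMap.toSpanSingleton_apply, one_smul, hg0, LinearMap.comp_apply,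
        Submodule.mkQ_apply] at h2
      exact h2
    have : φ m ≠ 0 := by
      rw [h1]
      intro h0
      have : (Submodule.Quotient.mk 1 : R ⧸ p) = 0 := hf.mono (by simpa using h0)
      rw [Submodule.Quotient.mk_eq_zero] at this
      exact ‹p.IsPrime›.ne_top (p.eq_top_iff_one.2 this)
    exact this (by rw [h φ]; rfl)
  · intro h φ
    ext m
    obtain ⟨s, hs, hsm⟩ := h m
    have : s • φ m = 0 := by rw [← map_smul, hsm, map_zero]
    exact (hf.smul_injective hs this).trans rfl

end ModuleTheory

section Homological

variable {R : Type} [CommRing R] {E : ModuleCat.{0} R} (n : ℤ)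

/-- If every map `H^n(K) → E` vanishes and `E` is injective, then every chain map
`K ⟶ E[-n]` becomes zero in the homotopy category. -/
lemma quotient_map_eq_zero_of_forall_hom_eq_zero (hE : Module.Injective R E)
    (K : CochainComplex (ModuleCat.{0} R) ℤ)
    (hK : ∀ φ : K.homology n ⟶ E, φ = 0)
    (ψ : K ⟶ (HomologicalComplex.single (ModuleCat.{0} R) (ComplexShape.up ℤ) n).obj E) :
    (HomotopyCategory.quotient (ModuleCat.{0} R) (ComplexShape.up ℤ)).map ψ = 0 := by
  classical
  have hrel : (ComplexShape.up ℤ).Rel n (n + 1) := rfl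
  -- the single complex and the self iso of its degree `n` part
  revert ψ
  set S := (HomologicalComplex.single (ModuleCat.{0} R) (ComplexShape.up ℤ) n).obj E with hS
  intro ψ
  set ι : S.X n ≅ E := HomologicalComplex.singleObjXSelf (ComplexShape.up ℤ) n E with hι
  -- `d (n-1, n) ≫ ψ.f n = 0`
  have hd : K.d (n - 1) n ≫ ψ.f n = 0 := by
    have h1 : ψ.f (n - 1) = 0 := by
      apply (HomologicalComplex.isZero_single_obj_X (ComplexShape.up ℤ) n E (n - 1)
        (by omega)).eq_of_tgt
    rw [← HomologicalComplex.Hom.comm, h1, zero_comp]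
  -- `ψ.f n` vanishes on cycles
  have hcyc : K.iCycles n ≫ ψ.f n = 0 := by
    have hdesc : K.toCycles (n - 1) n ≫ K.iCycles n ≫ ψ.f n = 0 := by
      rw [← Category.assoc, K.toCycles_i, hd]
    have hco := K.homologyIsCokernel (n - 1) n (by simp)
    obtain ⟨δ, hδ⟩ := CokernelCofork.IsColimit.desc' hco (K.iCycles n ≫ ψ.f n) hdesc
    have hδ0 : δ ≫ ι.hom = 0 := hK _
    have : δ = 0 := by
      rw [← Category.comp_id δ, ← ι.hom_inv_id, ← Category.assoc, hδ0, zero_comp]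
    rw [← hδ, this, comp_zero]
  -- the linear-map version of `ψ.f n`
  set ψn : K.X n ⟶ E := ψ.f n ≫ ι.hom with hψn
  -- `ψn` vanishes on the kernel of the differential
  have hker : ∀ x : K.X n, K.d n (n + 1) x = 0 → ψn x = 0 := by
    intro x hx
    set kerM := ModuleCat.of R (LinearMap.ker (K.d n (n + 1)).hom) with hkerM
    set incl : kerM ⟶ K.X n := ModuleCat.ofHom (LinearMap.ker _).subtype with hincl
    have h0 : incl ≫ K.d n (n + 1) = 0 := by
      apply ModuleCat.hom_ext
      apply LinearMap.ext
      rintro ⟨y, hy⟩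
      exact hy
    have hl := K.liftCycles_i incl (n + 1) (by simp) h0
    have : incl ≫ ψn = 0 := by
      rw [hψn, ← hl, Category.assoc, ← Category.assoc (K.iCycles n), hcyc, zero_comp, comp_zero]
    calc ψn x = (incl ≫ ψn) ⟨x, hx⟩ := rfl
    _ = 0 := by rw [this]; rfl
  -- extend to a contracting homotopy component using injectivity of `E`
  have hker_le : LinearMap.ker (K.d n (n + 1)).hom ≤
      LinearMap.ker ψn.hom := fun x hx => hker x hx
  set q : (K.X n ⧸ LinearMap.ker (K.d n (n + 1)).hom) →ₗ[R] E :=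
    Submodule.liftQ _ ψn.hom hker_le with hq
  set eqr := LinearMap.quotKerEquivRange (K.d n (n + 1)).hom with heqr
  obtain ⟨h, hh⟩ := hE.out (LinearMap.range (K.d n (n + 1)).hom).subtype (Submodule.injective_subtype _)
      (q.comp eqr.symm.toLinearMap)
  have hhd : ∀ x : K.X n, h (K.d n (n + 1) x) = ψn x := by
    intro x
    have h1 := hh ⟨K.d n (n + 1) x, LinearMap.mem_range_self _ x⟩
    rw [Submodule.subtype_apply] at h1
    have h2 : eqr.symm ⟨K.d n (n + 1) x, LinearMap.mem_range_self _ x⟩ =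
        Submodule.Quotient.mk x := by
      rw [LinearEquiv.symm_apply_eq]
      apply Subtype.ext
      exact (LinearMap.quotKerEquivRange_apply_mk _ x).symm
    rw [h1, LinearMap.comp_apply, LinearEquiv.coe_coe, h2, hq, Submodule.liftQ_apply]
  -- the homotopy
  set ho : ∀ i j, K.X i ⟶ S.X j := fun i j => if hij : i = n + 1 ∧ j = n then
      eqToHom (by rw [hij.1]) ≫ ((ModuleCat.ofHom h) ≫ ι.inv) ≫
        eqToHom (by rw [hij.2]) else 0 with hho
  have hoval : ho (n + 1) n = (ModuleCat.ofHom h) ≫ ι.inv := by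
    rw [hho]
    dsimp only
    rw [dif_pos ⟨rfl, rfl⟩, eqToHom_refl, eqToHom_refl, Category.id_comp, Category.comp_id]
  have homotopy : Homotopy ψ 0 := by
    refine { hom := ho, zero := fun i j hrel' => ?_, comm := fun i => ?_ }
    · rw [hho]
      dsimp only
      rw [dif_neg]
      rintro ⟨rfl, rfl⟩
      exact hrel' rfl
    · by_cases hi : i = n
      · subst hi
        have hSd : ∀ a b, S.d a b = 0 := fun a b =>
          HomologicalComplex.single_obj_d _ _ _ a b
        have hprev : prevD i ho = 0 := by
          rw [prevD_eq ho (show (ComplexShape.up ℤ).Rel (i - 1) i by simp), hSd, comp_zero]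
        rw [hprev, add_zero, HomologicalComplex.zero_f_apply, add_zero,
          dNext_eq ho hrel, hoval, ← cancel_mono ι.hom, Category.assoc, Category.assoc,
          ι.inv_hom_id, Category.comp_id]
        exact ModuleCat.hom_ext (LinearMap.ext fun x => (hhd x).symm)
      · apply (HomologicalComplex.isZero_single_obj_X (ComplexShape.up ℤ) n E i hi).eq_of_tgt
  have hfin := HomotopyCategory.eq_of_homotopy ψ 0 homotopy
  rw [Functor.map_zero] at hfin
  exact hfin

/-- Construction direction: if all maps `Q(K) ⟶ Q(E[-n])` vanish in the derived category,
then all maps `H^n(K) ⟶ E` vanish. -/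
lemma forall_hom_eq_zero_of_hom_eq_zero [HasDerivedCategory (ModuleCat.{0} R)]
    (hE : Module.Injective R E) (K : CochainComplex (ModuleCat.{0} R) ℤ)
    (hg : ∀ g : DerivedCategory.Q.obj K ⟶ DerivedCategory.Q.obj
      ((HomologicalComplex.single (ModuleCat.{0} R) (ComplexShape.up ℤ) n).obj E), g = 0)
    (φ : K.homology n ⟶ E) : φ = 0 := by
  set S := (HomologicalComplex.single (ModuleCat.{0} R) (ComplexShape.up ℤ) n).obj E with hS
  set ι : S.X n ≅ E := HomologicalComplex.singleObjXSelf (ComplexShape.up ℤ) n E with hι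
  -- extend `homologyπ ≫ φ` along the inclusion of cycles, using injectivity of `E`
  have hinj : Function.Injective (K.iCycles n).hom :=
    (ModuleCat.mono_iff_injective (K.iCycles n)).1 inferInstance
  obtain ⟨u, hu⟩ := hE.out (K.iCycles n).hom hinj (K.homologyπ n ≫ φ).hom
  have hu' : K.iCycles n ≫ (ModuleCat.ofHom u) = K.homologyπ n ≫ φ := ModuleCat.hom_ext (LinearMap.ext hu)
  have hcond : ∀ i, (ComplexShape.up ℤ).Rel i n → K.d i n ≫ (ModuleCat.ofHom u) = 0 := by
    intro i hi
    rw [← K.toCycles_i i n, Category.assoc, hu', ← Category.assoc,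
      K.toCycles_comp_homologyπ, zero_comp]
  set ψ : K ⟶ S := HomologicalComplex.mkHomToSingle (ModuleCat.ofHom u) hcond with hψ
  have h0 : DerivedCategory.Q.map ψ = 0 := hg _
  set α := DerivedCategory.homologyFunctorFactors (ModuleCat.{0} R) n with hα
  have hmap0 : HomologicalComplex.homologyMap ψ n = 0 := by
    have h1 : (DerivedCategory.homologyFunctor _ n).map (DerivedCategory.Q.map ψ) = 0 := by
      rw [h0, Functor.map_zero]
    have hnat := α.hom.naturality ψ
    rw [show (HomologicalComplex.homologyFunctor (ModuleCat R) (ComplexShape.up ℤ) n).map ψ =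
      HomologicalComplex.homologyMap ψ n from rfl] at hnat
    refine (cancel_epi (α.hom.app K)).1 (hnat.symm.trans (Eq.trans ?_ comp_zero.symm))
    show (DerivedCategory.homologyFunctor _ n).map (DerivedCategory.Q.map ψ) ≫ _ = 0
    rw [h1, zero_comp]
  -- therefore the map on cycles vanishes
  have hπ : S.homologyπ n =
      (HomologicalComplex.singleObjCyclesSelfIso (ComplexShape.up ℤ) n E).hom ≫
        (HomologicalComplex.singleObjHomologySelfIso (ComplexShape.up ℤ) n E).inv := by
    rw [← HomologicalComplex.singleObjCyclesSelfIso_inv_homologyπ, ← Category.assoc,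
      Iso.hom_inv_id, Category.id_comp]
  haveI : IsIso (S.homologyπ n) := by rw [hπ]; infer_instance
  have hcm : HomologicalComplex.cyclesMap ψ n = 0 := by
    have h2 := HomologicalComplex.homologyπ_naturality ψ n
    rw [hmap0, comp_zero] at h2
    exact (cancel_mono (S.homologyπ n)).1 (by rw [← h2, zero_comp])
  have hc : K.iCycles n ≫ ψ.f n = 0 := by
    rw [← HomologicalComplex.cyclesMap_i, hcm, zero_comp]
  have hψf : ψ.f n = (ModuleCat.ofHom u) ≫ ι.inv := by
    rw [hψ, hι, HomologicalComplex.mkHomToSingle_f]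
  have hcu : K.iCycles n ≫ (ModuleCat.ofHom u) = 0 := by
    rw [hψf] at hc
    calc K.iCycles n ≫ (ModuleCat.ofHom u)
        = (K.iCycles n ≫ (ModuleCat.ofHom u) ≫ ι.inv) ≫ ι.hom := by
          rw [Category.assoc, Category.assoc, Iso.inv_hom_id, Category.comp_id]
      _ = 0 := by rw [← Category.assoc] at hc ⊢; rw [hc, zero_comp]
  rw [hu'] at hcu
  exact (cancel_epi (K.homologyπ n)).1 (by rw [hcu, comp_zero])

/-- Vanishing direction: if all maps `H^n(K) ⟶ E` vanish, then all maps
`Q(K) ⟶ Q(E[-n])` vanish in the derived category. -/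
lemma hom_eq_zero_of_forall_hom_eq_zero [HasDerivedCategory (ModuleCat.{0} R)]
    (hE : Module.Injective R E) (K : CochainComplex (ModuleCat.{0} R) ℤ)
    (hK : ∀ φ : K.homology n ⟶ E, φ = 0)
    (g : DerivedCategory.Q.obj K ⟶ DerivedCategory.Q.obj
      ((HomologicalComplex.single (ModuleCat.{0} R) (ComplexShape.up ℤ) n).obj E)) :
    g = 0 := by
  revert g
  set S := (HomologicalComplex.single (ModuleCat.{0} R) (ComplexShape.up ℤ) n).obj E with hS
  intro g
  set W := HomotopyCategory.quasiIso (ModuleCat.{0} R) (ComplexShape.up ℤ) with hW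
  haveI : W.HasRightCalculusOfFractions := by
    rw [hW, HomotopyCategory.quasiIso_eq_subcategoryAcyclic_W]; infer_instance
  set e := DerivedCategory.quotientCompQhIso (ModuleCat.{0} R) with he
  set gh : DerivedCategory.Qh.obj
      ((HomotopyCategory.quotient (ModuleCat.{0} R) (ComplexShape.up ℤ)).obj K) ⟶
      DerivedCategory.Qh.obj
        ((HomotopyCategory.quotient (ModuleCat.{0} R) (ComplexShape.up ℤ)).obj S) :=
    e.hom.app K ≫ g ≫ e.inv.app S with hgh
  obtain ⟨fr, hfr⟩ := Localization.exists_rightFraction DerivedCategory.Qh W gh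
  -- lift numerator and denominator to chain maps
  obtain ⟨ψ, hψ⟩ := (HomotopyCategory.quotient (ModuleCat.{0} R)
    (ComplexShape.up ℤ)).map_surjective (X := fr.X'.as) (Y := S) fr.f
  obtain ⟨σ, hσ⟩ := (HomotopyCategory.quotient (ModuleCat.{0} R)
    (ComplexShape.up ℤ)).map_surjective (X := fr.X'.as) (Y := K) fr.s
  have hqi : HomologicalComplex.quasiIso (ModuleCat.{0} R) (ComplexShape.up ℤ) σ := by
    rw [← HomotopyCategory.quotient_map_mem_quasiIso_iff, hσ]
    exact fr.hs
  haveI : QuasiIso σ := by rwa [HomologicalComplex.mem_quasiIso_iff] at hqi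
  haveI : IsIso (HomologicalComplex.homologyMap σ n) :=
    (quasiIsoAt_iff_isIso_homologyMap σ n).1 inferInstance
  -- transfer the vanishing hypothesis along the quasi-isomorphism
  have hK' : ∀ φ : (fr.X'.as).homology n ⟶ E, φ = 0 := by
    intro φ
    have h1 := hK (inv (HomologicalComplex.homologyMap σ n) ≫ φ)
    calc φ = HomologicalComplex.homologyMap σ n ≫
          (inv (HomologicalComplex.homologyMap σ n) ≫ φ) := by
            rw [← Category.assoc, IsIso.hom_inv_id, Category.id_comp]
      _ = 0 := by rw [h1, comp_zero]
  -- the numerator is null-homotopic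
  have hψ0 : (HomotopyCategory.quotient (ModuleCat.{0} R) (ComplexShape.up ℤ)).map ψ = 0 :=
    quotient_map_eq_zero_of_forall_hom_eq_zero n hE fr.X'.as hK' ψ
  have hfr0 : fr.f = 0 := by rw [← hψ]; exact hψ0
  have hgh0 : gh = 0 := by
    rw [hfr, MorphismProperty.RightFraction.map, hfr0, Functor.map_zero, comp_zero]
  have hfin : g = e.inv.app K ≫ gh ≫ e.hom.app S := by
    rw [hgh]
    simp
  rw [hfin, hgh0, zero_comp, comp_zero]

end Homological

/-- Transfer of vanishing of localized modules along a linear equivalence. -/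
lemma subsingleton_localizedModule_of_equiv {R : Type} [CommRing R] (S : Submonoid R)
    {M N : Type} [AddCommGroup M] [Module R M] [AddCommGroup N] [Module R N]
    (eqv : M ≃ₗ[R] N) (h : Subsingleton (LocalizedModule S M)) :
    Subsingleton (LocalizedModule S N) := by
  rw [LocalizedModule.subsingleton_iff] at h ⊢
  intro m
  obtain ⟨r, hr, h0⟩ := h (eqv.symm m)
  refine ⟨r, hr, ?_⟩
  calc r • m = eqv (r • eqv.symm m) := by rw [map_smul, eqv.apply_symm_apply]
    _ = 0 := by rw [h0, map_zero]

theorem hom_to_injective_hull_stalk_eq_zero_iff_not_mem_support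
    (R : Type) [CommRing R] [IsNoetherianRing R] [HasDerivedCategory (ModuleCat R)]
    (X : DerivedCategory (ModuleCat R)) (p : Ideal R) [p.IsPrime] (n : ℤ)
    (E : ModuleCat R) (f : (R ⧸ p) →ₗ[R] E) (hf : IsInjectiveHull R f) :
    (∀ g : X ⟶ stalk R E n, g = 0) ↔
      Subsingleton (LocalizedModule p.primeCompl
        ((DerivedCategory.homologyFunctor (ModuleCat R) n).obj X)) := by
  have hE : Module.Injective R E := hf.injective
  haveI : (DerivedCategory.Q (C := ModuleCat.{0} R)).EssSurj :=
    Localization.essSurj _ (HomologicalComplex.quasiIso _ _)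
  set K := DerivedCategory.Q.objPreimage X with hK
  set e : DerivedCategory.Q.obj K ≅ X := DerivedCategory.Q.objObjPreimageIso X with he
  set α := DerivedCategory.homologyFunctorFactors (ModuleCat.{0} R) n with hα
  set Hiso : (DerivedCategory.homologyFunctor (ModuleCat R) n).obj X ≅ K.homology n :=
    (DerivedCategory.homologyFunctor (ModuleCat R) n).mapIso e.symm ≪≫ α.app K with hHiso
  set ε : ((DerivedCategory.homologyFunctor (ModuleCat R) n).obj X) ≃ₗ[R] K.homology n :=
    Hiso.toLinearEquiv with hε
  constructor
  · intro hg
    have h1 : ∀ φ' : K.homology n →ₗ[R] E, φ' = 0 := by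
      intro φ'
      refine (ModuleCat.hom_ofHom φ').symm.trans ((congrArg ModuleCat.Hom.hom
        (forall_hom_eq_zero_of_hom_eq_zero n hE K (fun g => ?_) (ModuleCat.ofHom φ'))).trans rfl)
      have h2 : e.inv ≫ g = 0 := hg (e.inv ≫ g)
      calc g = e.hom ≫ e.inv ≫ g := by rw [← Category.assoc, e.hom_inv_id, Category.id_comp]
        _ = 0 := by rw [h2, comp_zero]
    have h2 := (hf.forall_hom_eq_zero_iff (K.homology n)).1 h1
    exact subsingleton_localizedModule_of_equiv p.primeCompl ε.symm h2
  · intro hsub g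
    have h1 : Subsingleton (LocalizedModule p.primeCompl (K.homology n)) :=
      subsingleton_localizedModule_of_equiv p.primeCompl ε hsub
    have h2 : ∀ φ' : K.homology n →ₗ[R] E, φ' = 0 :=
      (hf.forall_hom_eq_zero_iff (K.homology n)).2 h1
    have h3 : e.hom ≫ g = 0 := hom_eq_zero_of_forall_hom_eq_zero n hE K
      (fun φ => ModuleCat.hom_ext ((h2 φ.hom).trans ModuleCat.hom_zero.symm)) (e.hom ≫ g)
    calc g = e.inv ≫ e.hom ≫ g := by rw [← Category.assoc, e.inv_hom_id, Category.id_comp]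
      _ = 0 := by rw [h3, comp_zero]
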